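/- Let R be a right and left Ore ring with classical quotient ring Q = R[S^{-1}] = [S^{-1}]R (S the set of regular elements of R), suppose the finitistic dimension of Q as a right Q-module is 0, and assume every right R-module of weak dimension ≤ 1 has projective dimension ≤ 1. Then the class Q^⊥ = {M : Ext^1_R(Q, M) = 0} of Matlis-cotorsion right R-modules is closed under homomorphic images. -/

import Mathlib

open MulOpposite

universe u

/-- `φ : R →+* Q` is an epimorphism in the category of rings. -/
def IsRingEpi {R Q : Type u} [Ring R] [Ring Q] (φ : R →+* Q) : Prop :=
  ∀ (T : Type u) [Ring T] (ψ ω : Q →+* T), ψ.comp φ = ω.comp φ → ψ = ω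

section NCTensor

variable (R : Type u) [Ring R] (M : Type u) [AddCommGroup M] [Module Rᵐᵒᵖ M]
  (N : Type u) [AddCommGroup N] [Module R N]

/-- Relations defining the tensor product `M ⊗_R N` of a right `R`-module `M`
and a left `R`-module `N` over a (possibly noncommutative) ring `R`. -/
def ncRels : AddSubgroup (FreeAbelianGroup (M × N)) :=
  AddSubgroup.closure
    ({x | ∃ m m' n, x = FreeAbelianGroup.of (m + m', n) - FreeAbelianGroup.of (m, n) -
        FreeAbelianGroup.of (m', n)} ∪
     {x | ∃ m n n', x = FreeAbelianGroup.of (m, n + n') - FreeAbelianGroup.of (m, n) -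
        FreeAbelianGroup.of (m, n')} ∪
     {x | ∃ (r : R) (m : M) (n : N), x = FreeAbelianGroup.of (op r • m, n) -
        FreeAbelianGroup.of (m, r • n)})

/-- The tensor product `M ⊗_R N` of a right `R`-module and a left `R`-module over a
(possibly noncommutative) ring `R`, as an abelian group. -/
def NCTensor : Type u := FreeAbelianGroup (M × N) ⧸ ncRels R M N

instance : AddCommGroup (NCTensor R M N) :=
  QuotientAddGroup.Quotient.addCommGroup _

/-- The pure tensor `m ⊗ n` in `M ⊗_R N`. -/
def NCTensor.tmul (m : M) (n : N) : NCTensor R M N :=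
  QuotientAddGroup.mk (FreeAbelianGroup.of (m, n))

end NCTensor

/-- A right `R`-module `M` is flat if tensoring left `R`-modules with `M`
preserves injectivity. -/
def IsFlatRightModule (R : Type u) [Ring R] (M : Type u) [AddCommGroup M]
    [Module Rᵐᵒᵖ M] : Prop :=
  ∀ (A B : Type u) [AddCommGroup A] [AddCommGroup B] [Module R A] [Module R B]
    (i : A →ₗ[R] B), Function.Injective i →
    ∀ g : NCTensor R M A →+ NCTensor R M B,
      (∀ m a, g (NCTensor.tmul R M A m a) = NCTensor.tmul R M B m (i a)) →
      Function.Injective g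

/-- A right `R`-module `I` has weak (flat) dimension at most 1: there is a short exact
sequence `0 → F₁ → F₀ → I → 0` with `F₁` and `F₀` flat. -/
def RFlatDimLE1 (R : Type u) [Ring R] (I : Type u) [AddCommGroup I] [Module Rᵐᵒᵖ I] : Prop :=
  ∃ (F1 : Type u) (a1 : AddCommGroup F1), letI := a1; ∃ (m1 : Module Rᵐᵒᵖ F1), letI := m1;
  ∃ (F0 : Type u) (a0 : AddCommGroup F0), letI := a0; ∃ (m0 : Module Rᵐᵒᵖ F0), letI := m0;
  ∃ (i : F1 →ₗ[Rᵐᵒᵖ] F0) (p : F0 →ₗ[Rᵐᵒᵖ] I),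
    IsFlatRightModule R F1 ∧ IsFlatRightModule R F0 ∧
    Function.Injective i ∧ Function.Surjective p ∧ LinearMap.range i = LinearMap.ker p

open CategoryTheory in
/-- The Ext group `Ext^n_A(M, N)` for modules over an arbitrary ring `A`,
computed in the abelian category of `A`-modules. -/
noncomputable abbrev extGroup (A : Type u) [Ring A] (n : ℕ) (M : Type u) [AddCommGroup M]
    [Module A M] (N : Type u) [AddCommGroup N] [Module A N] : Type u :=
  ((Ext ℤ (ModuleCat.{u} A) n).obj (Opposite.op (ModuleCat.of A M))).obj (ModuleCat.of A N)

/-- An element `s` of a ring `R` is regular if it is neither a left nor a right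
zero-divisor. -/
def RegElem (R : Type u) [Ring R] (s : R) : Prop :=
  (∀ a : R, s * a = 0 → a = 0) ∧ (∀ a : R, a * s = 0 → a = 0)

namespace NCTensor

variable {R : Type u} [Ring R] {M : Type u} [AddCommGroup M] [Module Rᵐᵒᵖ M]
  {N : Type u} [AddCommGroup N] [Module R N]

lemma mk_eq_mk {a b : FreeAbelianGroup (M × N)} (h : a - b ∈ ncRels R M N) :
    (QuotientAddGroup.mk a : NCTensor R M N) = QuotientAddGroup.mk b :=
  (QuotientAddGroup.eq_iff_sub_mem).mpr h

lemma tmul_add_left (m m' : M) (n : N) :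
    tmul R M N (m + m') n = tmul R M N m n + tmul R M N m' n := by
  show QuotientAddGroup.mk _ = QuotientAddGroup.mk _
  apply mk_eq_mk
  apply AddSubgroup.subset_closure
  left; left
  exact ⟨m, m', n, by rw [sub_add_eq_sub_sub]⟩

lemma tmul_add_right (m : M) (n n' : N) :
    tmul R M N m (n + n') = tmul R M N m n + tmul R M N m n' := by
  show QuotientAddGroup.mk _ = QuotientAddGroup.mk _
  apply mk_eq_mk
  apply AddSubgroup.subset_closure
  left; right
  exact ⟨m, n, n', by rw [sub_add_eq_sub_sub]⟩

lemma tmul_op_smul (r : R) (m : M) (n : N) :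
    tmul R M N (op r • m) n = tmul R M N m (r • n) := by
  apply mk_eq_mk
  apply AddSubgroup.subset_closure
  right
  exact ⟨r, m, n, by abel⟩

lemma tmul_zero_right (m : M) : tmul R M N m 0 = 0 := by
  have h := tmul_add_right (R := R) m (0 : N) 0
  rw [add_zero] at h
  exact (add_eq_left.mp h.symm)

lemma tmul_zero_left (n : N) : tmul R M N 0 n = 0 := by
  have h := tmul_add_left (R := R) (0 : M) 0 n
  rw [add_zero] at h
  exact (add_eq_left.mp h.symm)

lemma tmul_neg_right (m : M) (n : N) : tmul R M N m (-n) = - tmul R M N m n := by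
  have h := tmul_add_right (R := R) m n (-n)
  rw [add_neg_cancel, tmul_zero_right] at h
  exact (eq_neg_of_add_eq_zero_right h.symm)

lemma induction_on {P : NCTensor R M N → Prop} (x : NCTensor R M N) (h0 : P 0)
    (htmul : ∀ m n, P (tmul R M N m n)) (hneg : ∀ y, P y → P (-y))
    (hadd : ∀ y z, P y → P z → P (y + z)) : P x := by
  obtain ⟨z, rfl⟩ := QuotientAddGroup.mk_surjective x
  induction z using FreeAbelianGroup.induction_on with
  | zero => exact h0
  | of p => exact htmul p.1 p.2
  | neg p _ => exact hneg _ (htmul p.1 p.2)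
  | add y z hy hz => exact hadd _ _ hy hz

end NCTensor

section Ore
variable {R Q : Type u} [Ring R] [Ring Q]

/-- The submonoid of regular elements. -/
def regS (R : Type u) [Ring R] : Submonoid R where
  carrier := {s | RegElem R s}
  one_mem' := ⟨fun a h => by simpa using h, fun a h => by simpa using h⟩
  mul_mem' := by
    rintro s t ⟨hs1, hs2⟩ ⟨ht1, ht2⟩
    exact ⟨fun a h => ht1 a (hs1 _ (by rw [← mul_assoc]; exact h)),
           fun a h => hs2 a (ht2 _ (by rw [mul_assoc]; exact h))⟩

theorem oreCond (φ : R →+* Q) (hinj : Function.Injective φ)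
    (hunit : ∀ s : R, RegElem R s → IsUnit (φ s))
    (hden' : ∀ q : Q, ∃ r s : R, RegElem R s ∧ φ s * q = φ r) :
    ∀ (r : R) (s : R), RegElem R s → ∃ t u : R, RegElem R u ∧ u * r = t * s := by
  intro r s hs
  obtain ⟨v, hv⟩ := hunit s hs
  obtain ⟨t, u, hu, h⟩ := hden' (φ r * ↑v⁻¹)
  refine ⟨t, u, hu, hinj ?_⟩
  rw [map_mul, map_mul]
  have hinv : (↑v⁻¹ : Q) * φ s = 1 := by rw [← hv]; exact Units.inv_mul _
  calc φ u * φ r = φ u * (φ r * ↑v⁻¹ * φ s) := by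
        rw [mul_assoc (φ r), hinv, mul_one]
    _ = φ u * (φ r * ↑v⁻¹) * φ s := by rw [← mul_assoc]
    _ = φ t * φ s := by rw [h]

noncomputable def oreSetRegS (φ : R →+* Q) (hinj : Function.Injective φ)
    (hunit : ∀ s : R, RegElem R s → IsUnit (φ s))
    (hden' : ∀ q : Q, ∃ r s : R, RegElem R s ∧ φ s * q = φ r) :
    OreLocalization.OreSet (regS R) := by
  apply Classical.choice
  rw [OreLocalization.nonempty_oreSet_iff]
  constructor
  · rintro r₁ r₂ ⟨s, hs⟩ h
    refine ⟨1, ?_⟩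
    have h0 : (r₁ - r₂) * s = 0 := by
      rw [sub_mul, sub_eq_zero]
      exact h
    have := hs.2 _ h0
    simp only [OneMemClass.coe_one, one_mul]
    rw [← sub_eq_zero]
    exact this
  · intro r s
    obtain ⟨t, u, hu, h⟩ := oreCond φ hinj hunit hden' r s s.2
    exact ⟨t, ⟨u, hu⟩, h⟩

variable [OreLocalization.OreSet (regS R)]

noncomputable def fSreg (φ : R →+* Q) (hunit : ∀ s : R, RegElem R s → IsUnit (φ s)) :
    (regS R) →* Qˣ where
  toFun s := (hunit s s.2).unit
  map_one' := by ext; simp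
  map_mul' s t := by ext; simp

noncomputable def oreToQ (φ : R →+* Q) (hunit : ∀ s : R, RegElem R s → IsUnit (φ s)) :
    OreLocalization (regS R) R →+* Q :=
  OreLocalization.universalHom φ (fSreg φ hunit) (fun s => (IsUnit.unit_spec _).symm)

theorem oreToQ_bijective (φ : R →+* Q) (hinj : Function.Injective φ)
    (hunit : ∀ s : R, RegElem R s → IsUnit (φ s))
    (hden' : ∀ q : Q, ∃ r s : R, RegElem R s ∧ φ s * q = φ r) :
    Function.Bijective (oreToQ φ hunit) := by
  constructor
  · rw [injective_iff_map_eq_zero]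
    intro x
    induction x using OreLocalization.ind with
    | _ r s =>
      intro h
      erw [oreToQ, OreLocalization.universalHom_apply] at h
      have h1 : φ r = 0 := by
        have := congrArg (fun z => (↑(fSreg φ hunit s) : Q) * z) h
        simpa [Units.mul_inv_cancel_left] using this
      have : r = 0 := hinj (by simpa using h1)
      rw [this, OreLocalization.zero_oreDiv]
  · intro q
    obtain ⟨r, s, hs, h⟩ := hden' q
    refine ⟨r /ₒ ⟨s, hs⟩, ?_⟩
    erw [oreToQ, OreLocalization.universalHom_apply]
    have hφs : (↑(fSreg φ hunit ⟨s, hs⟩) : Q) = φ s := (IsUnit.unit_spec _)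
    calc ((fSreg φ hunit ⟨s, hs⟩)⁻¹ : Qˣ) * φ r
        = ↑(fSreg φ hunit ⟨s, hs⟩)⁻¹ * (φ s * q) := by rw [h]
      _ = ↑(fSreg φ hunit ⟨s, hs⟩)⁻¹ * (↑(fSreg φ hunit ⟨s, hs⟩) * q) := by rw [hφs]
      _ = q := by rw [← mul_assoc, Units.inv_mul, one_mul]

noncomputable def qToOre (φ : R →+* Q) (hinj : Function.Injective φ)
    (hunit : ∀ s : R, RegElem R s → IsUnit (φ s))
    (hden' : ∀ q : Q, ∃ r s : R, RegElem R s ∧ φ s * q = φ r) :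
    Q ≃+* OreLocalization (regS R) R :=
  (RingEquiv.ofBijective (oreToQ φ hunit) (oreToQ_bijective φ hinj hunit hden')).symm

theorem oreToQ_div_one (φ : R →+* Q) (hunit : ∀ s : R, RegElem R s → IsUnit (φ s)) (r : R) :
    oreToQ φ hunit (r /ₒ (1 : regS R)) = φ r := by
  rw [← OreLocalization.numeratorHom_apply]
  exact OreLocalization.universalHom_commutes φ (fSreg φ hunit)
    (fun s => (IsUnit.unit_spec _).symm)

theorem qToOre_phi (φ : R →+* Q) (hinj : Function.Injective φ)
    (hunit : ∀ s : R, RegElem R s → IsUnit (φ s))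
    (hden' : ∀ q : Q, ∃ r s : R, RegElem R s ∧ φ s * q = φ r) (r : R) :
    qToOre φ hinj hunit hden' (φ r) = r /ₒ (1 : regS R) := by
  set e := RingEquiv.ofBijective (oreToQ φ hunit) (oreToQ_bijective φ hinj hunit hden') with he
  apply e.injective
  show e (e.symm (φ r)) = e (r /ₒ (1 : regS R))
  rw [RingEquiv.apply_symm_apply]
  exact (oreToQ_div_one φ hunit r).symm

end Ore

section Flat

variable {R Q : Type u} [Ring R] [Ring Q]

noncomputable def qTensorToOre [OreLocalization.OreSet (regS R)] [Module Rᵐᵒᵖ Q]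
    (φ : R →+* Q) (hinj : Function.Injective φ)
    (hunit : ∀ s : R, RegElem R s → IsUnit (φ s))
    (hden' : ∀ q : Q, ∃ r s : R, RegElem R s ∧ φ s * q = φ r)
    (hr : ∀ (r : R) (q : Q), op r • q = q * φ r)
    (B : Type u) [AddCommGroup B] [Module R B] :
    NCTensor R Q B →+ OreLocalization (regS R) B := by
  refine QuotientAddGroup.lift (ncRels R Q B)
    (FreeAbelianGroup.lift fun p : Q × B =>
      (qToOre φ hinj hunit hden' p.1) • (p.2 /ₒ (1 : regS R))) ?_
  have hle : ncRels R Q B ≤ (FreeAbelianGroup.lift fun p : Q × B =>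
      (qToOre φ hinj hunit hden' p.1) • (p.2 /ₒ (1 : regS R))).ker := by
    rw [ncRels]
    rw [AddSubgroup.closure_le]
    rintro y (( ⟨m, m', n, rfl⟩ | ⟨m, n, n', rfl⟩ ) | ⟨r, m, n, rfl⟩) <;>
      rw [SetLike.mem_coe, AddMonoidHom.mem_ker] <;>
      simp only [map_sub, FreeAbelianGroup.lift_apply_of]
    · rw [map_add, add_smul, sub_sub, sub_eq_zero]
    · rw [← OreLocalization.add_oreDiv, smul_add, sub_sub, sub_eq_zero]
    · rw [hr, map_mul, qToOre_phi φ hinj hunit hden', mul_smul,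
        OreLocalization.smul_div_one, sub_eq_zero]
  intro x hx
  exact AddMonoidHom.mem_ker.mp (hle hx)

lemma qTensorToOre_tmul [OreLocalization.OreSet (regS R)] [Module Rᵐᵒᵖ Q]
    (φ : R →+* Q) (hinj : Function.Injective φ)
    (hunit : ∀ s : R, RegElem R s → IsUnit (φ s))
    (hden' : ∀ q : Q, ∃ r s : R, RegElem R s ∧ φ s * q = φ r)
    (hr : ∀ (r : R) (q : Q), op r • q = q * φ r)
    (B : Type u) [AddCommGroup B] [Module R B] (q : Q) (b : B) :
    qTensorToOre φ hinj hunit hden' hr B (NCTensor.tmul R Q B q b) =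
      (qToOre φ hinj hunit hden' q) • (b /ₒ (1 : regS R)) := by
  show (FreeAbelianGroup.lift fun p : Q × B =>
      (qToOre φ hinj hunit hden' p.1) • (p.2 /ₒ (1 : regS R))) (FreeAbelianGroup.of (q, b)) = _
  exact FreeAbelianGroup.lift_apply_of _ _

lemma phi_cancel_right (φ : R →+* Q)
    (hunit : ∀ s : R, RegElem R s → IsUnit (φ s))
    {u : R} (hu : RegElem R u) {x y : Q} (h : x * φ u = y * φ u) : x = y := by
  obtain ⟨v, hv⟩ := hunit u hu
  calc x = x * φ u * ↑v⁻¹ := by rw [← hv, mul_assoc, Units.mul_inv, mul_one]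
    _ = y * φ u * ↑v⁻¹ := by rw [h]
    _ = y := by rw [← hv, mul_assoc, Units.mul_inv, mul_one]

lemma phi_mul_inv (φ : R →+* Q)
    (hunit : ∀ s : R, RegElem R s → IsUnit (φ s))
    {u : R} (hu : RegElem R u) : φ u * ↑(hunit u hu).unit⁻¹ = 1 := by
  have h := (hunit u hu).unit.mul_inv
  rwa [(hunit u hu).unit_spec] at h

lemma inv_mul_phi (φ : R →+* Q)
    (hunit : ∀ s : R, RegElem R s → IsUnit (φ s))
    {u : R} (hu : RegElem R u) : (↑(hunit u hu).unit⁻¹ : Q) * φ u = 1 := by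
  have h := (hunit u hu).unit.inv_mul
  rwa [(hunit u hu).unit_spec] at h

lemma exists_rep [Module Rᵐᵒᵖ Q]
    (φ : R →+* Q) (hinj : Function.Injective φ)
    (hunit : ∀ s : R, RegElem R s → IsUnit (φ s))
    (hden' : ∀ q : Q, ∃ r s : R, RegElem R s ∧ φ s * q = φ r)
    (hr : ∀ (r : R) (q : Q), op r • q = q * φ r)
    (A : Type u) [AddCommGroup A] [Module R A] (x : NCTensor R Q A) :
    ∃ (u : R) (hu : RegElem R u) (a : A),
      x = NCTensor.tmul R Q A (↑(hunit u hu).unit⁻¹) a := by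
  induction x using NCTensor.induction_on with
  | h0 =>
    refine ⟨1, (regS R).one_mem, 0, ?_⟩
    rw [NCTensor.tmul_zero_right]
  | htmul q a =>
    obtain ⟨r, s, hs, hq⟩ := hden' q
    refine ⟨s, hs, r • a, ?_⟩
    have hq2 : q = op r • (↑(hunit s hs).unit⁻¹ : Q) := by
      rw [hr]
      rw [← hq, ← mul_assoc, inv_mul_phi φ hunit hs, one_mul]
    rw [hq2, NCTensor.tmul_op_smul]
  | hneg y hy =>
    obtain ⟨u, hu, a, rfl⟩ := hy
    exact ⟨u, hu, -a, by rw [NCTensor.tmul_neg_right]⟩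
  | hadd y z hy hz =>
    obtain ⟨u, hu, a, rfl⟩ := hy
    obtain ⟨v, hv, b, rfl⟩ := hz
    obtain ⟨t, w, hw, hwt⟩ := oreCond φ hinj hunit hden' u v hv
    have hm : RegElem R (w * u) := (regS R).mul_mem hw hu
    refine ⟨w * u, hm, w • a + t • b, ?_⟩
    have h1 : (↑(hunit u hu).unit⁻¹ : Q) = op w • (↑(hunit (w*u) hm).unit⁻¹ : Q) := by
      rw [hr]
      apply phi_cancel_right φ hunit hu
      rw [mul_assoc, ← map_mul, inv_mul_phi φ hunit hu, inv_mul_phi φ hunit hm]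
    have h2 : (↑(hunit v hv).unit⁻¹ : Q) = op t • (↑(hunit (w*u) hm).unit⁻¹ : Q) := by
      rw [hr]
      apply phi_cancel_right φ hunit hv
      rw [mul_assoc, ← map_mul, ← hwt, inv_mul_phi φ hunit hv, inv_mul_phi φ hunit hm]
    rw [h1, h2, NCTensor.tmul_op_smul, NCTensor.tmul_op_smul, ← NCTensor.tmul_add_right]

lemma reg_smul_zero_of_tmul_zero [OreLocalization.OreSet (regS R)] [Module Rᵐᵒᵖ Q]
    (φ : R →+* Q) (hinj : Function.Injective φ)
    (hunit : ∀ s : R, RegElem R s → IsUnit (φ s))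
    (hden' : ∀ q : Q, ∃ r s : R, RegElem R s ∧ φ s * q = φ r)
    (hr : ∀ (r : R) (q : Q), op r • q = q * φ r)
    (B : Type u) [AddCommGroup B] [Module R B]
    {u : R} (hu : RegElem R u) (b : B)
    (h : NCTensor.tmul R Q B (↑(hunit u hu).unit⁻¹) b = 0) :
    ∃ c : R, RegElem R c ∧ c • b = 0 := by
  have h0 := congrArg (qTensorToOre φ hinj hunit hden' hr B) h
  rw [qTensorToOre_tmul, map_zero] at h0
  have hb : (b /ₒ (1 : regS R)) = 0 := by
    calc b /ₒ (1 : regS R)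
        = (qToOre φ hinj hunit hden' (φ u * ↑(hunit u hu).unit⁻¹)) • (b /ₒ (1 : regS R)) := by
          rw [phi_mul_inv φ hunit hu, map_one, one_smul]
      _ = (qToOre φ hinj hunit hden' (φ u)) • ((qToOre φ hinj hunit hden'
            (↑(hunit u hu).unit⁻¹ : Q)) • (b /ₒ (1 : regS R))) := by
          rw [map_mul, mul_smul]
      _ = 0 := by rw [h0, smul_zero]
  rw [OreLocalization.zero_def, OreLocalization.oreDiv_eq_iff] at hb
  obtain ⟨c, v, hc1, hc2⟩ := hb
  rw [smul_zero] at hc1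
  simp only [OneMemClass.coe_one, mul_one] at hc2
  refine ⟨(c : R), c.2, ?_⟩
  rw [hc2]
  exact hc1.symm

theorem isFlatRightModule_Q [Module Rᵐᵒᵖ Q]
    (φ : R →+* Q) (hinj : Function.Injective φ)
    (hunit : ∀ s : R, RegElem R s → IsUnit (φ s))
    (hden' : ∀ q : Q, ∃ r s : R, RegElem R s ∧ φ s * q = φ r)
    (hr : ∀ (r : R) (q : Q), op r • q = q * φ r) :
    IsFlatRightModule R Q := by
  letI := oreSetRegS φ hinj hunit hden'
  unfold IsFlatRightModule
  intro A B _ _ _ _ i hi g hg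
  rw [injective_iff_map_eq_zero]
  intro x hx
  obtain ⟨u, hu, a, rfl⟩ := exists_rep φ hinj hunit hden' hr A x
  rw [hg] at hx
  obtain ⟨c, hc, hcb⟩ := reg_smul_zero_of_tmul_zero φ hinj hunit hden' hr B hu (i a) hx
  have hca : c • a = 0 := by
    apply hi
    rw [map_smul, hcb, map_zero]
  have hm : RegElem R (c * u) := (regS R).mul_mem hc hu
  have h1 : (↑(hunit u hu).unit⁻¹ : Q) = op c • (↑(hunit (c*u) hm).unit⁻¹ : Q) := by
    rw [hr]
    apply phi_cancel_right φ hunit hu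
    rw [mul_assoc, ← map_mul, inv_mul_phi φ hunit hu, inv_mul_phi φ hunit hm]
  rw [h1, NCTensor.tmul_op_smul, hca, NCTensor.tmul_zero_right]

end Flat

section PUnitFlat

variable {R : Type u} [Ring R]

lemma nctensor_punit_eq_zero (A : Type u) [AddCommGroup A] [Module R A]
    (x : NCTensor R PUnit A) : x = 0 := by
  induction x using NCTensor.induction_on with
  | h0 => rfl
  | htmul m a =>
    have : m = 0 := Subsingleton.elim _ _
    rw [this, NCTensor.tmul_zero_left]
  | hneg y hy => rw [hy, neg_zero]
  | hadd y z hy hz => rw [hy, hz, add_zero]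

lemma isFlatRightModule_punit : IsFlatRightModule R PUnit := by
  unfold IsFlatRightModule
  intro A B _ _ _ _ i hi g hg x y hxy
  rw [nctensor_punit_eq_zero A x, nctensor_punit_eq_zero A y]

theorem rflatDimLE1_of_flat (Q : Type u) [AddCommGroup Q] [Module Rᵐᵒᵖ Q]
    (hQ : IsFlatRightModule R Q) : RFlatDimLE1 R Q := by
  refine ⟨PUnit, inferInstance, inferInstance, Q, inferInstance, inferInstance,
    0, LinearMap.id, isFlatRightModule_punit, hQ, ?_, fun y => ⟨y, rfl⟩, ?_⟩
  · intro a b _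
    exact Subsingleton.elim a b
  · rw [LinearMap.range_zero, LinearMap.ker_id]

end PUnitFlat


open CategoryTheory Limits in
lemma extGroup_subsingleton_iff {A : Type u} [Ring A] (X : Type u) [AddCommGroup X] [Module A X]
    (P : CategoryTheory.ProjectiveResolution (ModuleCat.of A X)) (n : ℕ) (Y : Type u)
    [AddCommGroup Y] [Module A Y] :
    Subsingleton (extGroup A (n+1) X Y) ↔
      ∀ f : P.complex.X (n+1) ⟶ ModuleCat.of A Y, P.complex.d (n+2) (n+1) ≫ f = 0 →
        ∃ g : P.complex.X n ⟶ ModuleCat.of A Y, P.complex.d (n+1) n ≫ g = f := by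
  have iso := P.isoExt (R := ℤ) (n+1) (ModuleCat.of A Y)
  have h1 : Subsingleton (extGroup A (n+1) X Y) ↔
      IsZero ((P.complex.linearYonedaObj ℤ (ModuleCat.of A Y)).homology (n+1)) := by
    constructor
    · intro h
      exact (ModuleCat.isZero_of_subsingleton _).of_iso iso.symm
    · intro h
      have h2 := h.of_iso iso
      have : (𝟙 (((Ext ℤ (ModuleCat.{u} A) (n+1)).obj
          (Opposite.op (ModuleCat.of A X))).obj (ModuleCat.of A Y))) = 0 := h2.eq_of_src _ _
      constructor
      intro a b
      calc a = 0 := by rw [← ModuleCat.id_apply _ a, this]; rfl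
        _ = b := by rw [← ModuleCat.id_apply _ b, this]; rfl
  rw [h1, ← HomologicalComplex.exactAt_iff_isZero_homology,
    HomologicalComplex.exactAt_iff' _ n (n+1) (n+2) (by simp) (by simp),
    CategoryTheory.ShortComplex.moduleCat_exact_iff]
  constructor
  · intro h f hf
    exact h f hf
  · intro h f hf
    exact h f hf

open CategoryTheory Limits in
/-- Let `R` be a right and left Ore ring with classical two-sided quotient ring
`Q = R[S⁻¹] = [S⁻¹]R` (`S` the set of regular elements), with `Fdim(Q_Q) = 0`
(every right `Q`-module of finite projective dimension is projective).  If every right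
`R`-module of weak dimension `≤ 1` has projective dimension `≤ 1`, then the class of
Matlis-cotorsion right `R`-modules (`Ext^1_R(Q, -) = 0`) is closed under
homomorphic images. -/
theorem matlisCotorsion_closed_under_quotients {R Q : Type u} [Ring R] [Ring Q]
    (φ : R →+* Q) (hinj : Function.Injective φ)
    (hunit : ∀ s : R, RegElem R s → IsUnit (φ s))
    (hden : ∀ q : Q, ∃ r s : R, RegElem R s ∧ q * φ s = φ r)
    (hden' : ∀ q : Q, ∃ r s : R, RegElem R s ∧ φ s * q = φ r)
    (hFdim : ∀ (M : Type u) [AddCommGroup M] [Module Qᵐᵒᵖ M],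
      (∃ n : ℕ, ∀ (N : Type u) [AddCommGroup N] [Module Qᵐᵒᵖ N],
        Subsingleton (extGroup Qᵐᵒᵖ (n + 1) M N)) → Module.Projective Qᵐᵒᵖ M)
    [Module Rᵐᵒᵖ Q] (hr : ∀ (r : R) (q : Q), op r • q = q * φ r)
    (hvi : ∀ (M : Type u) [AddCommGroup M] [Module Rᵐᵒᵖ M], RFlatDimLE1 R M →
      ∀ (N : Type u) [AddCommGroup N] [Module Rᵐᵒᵖ N],
        Subsingleton (extGroup Rᵐᵒᵖ 2 M N)) :
    ∀ (M : Type u) [AddCommGroup M] [Module Rᵐᵒᵖ M],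
      Subsingleton (extGroup Rᵐᵒᵖ 1 Q M) →
      ∀ N : Submodule Rᵐᵒᵖ M, Subsingleton (extGroup Rᵐᵒᵖ 1 Q (M ⧸ N)) := by
  intro M _ _ hM N
  have hQdim : RFlatDimLE1 R Q :=
    rflatDimLE1_of_flat Q (isFlatRightModule_Q φ hinj hunit hden' hr)
  have h2 : ∀ (N' : Type u) [AddCommGroup N'] [Module Rᵐᵒᵖ N'],
      Subsingleton (extGroup Rᵐᵒᵖ 2 Q N') := hvi Q hQdim
  obtain ⟨P⟩ : Nonempty (CategoryTheory.ProjectiveResolution (ModuleCat.of Rᵐᵒᵖ Q)) :=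
    CategoryTheory.HasProjectiveResolution.out
  rw [extGroup_subsingleton_iff Q P 0] at hM
  simp only [Nat.reduceAdd, zero_add] at hM
  rw [extGroup_subsingleton_iff Q P 0]
  simp only [Nat.reduceAdd, zero_add]
  have hN := (extGroup_subsingleton_iff Q P 1 N).mp (h2 N)
  simp only [Nat.reduceAdd] at hN
  intro f hf
  set π : ModuleCat.of Rᵐᵒᵖ M ⟶ ModuleCat.of Rᵐᵒᵖ (M ⧸ N) := ModuleCat.ofHom N.mkQ with hπ
  haveI : CategoryTheory.Epi π := (ModuleCat.epi_iff_surjective π).mpr (Submodule.mkQ_surjective N)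
  set f' : P.complex.X 1 ⟶ ModuleCat.of Rᵐᵒᵖ M := CategoryTheory.Projective.factorThru f π with hf'
  have hfπ : f' ≫ π = f := CategoryTheory.Projective.factorThru_comp f π
  have hmem : ∀ x : P.complex.X 2, (P.complex.d 2 1 ≫ f') x ∈ N := by
    intro x
    rw [← Submodule.Quotient.mk_eq_zero]
    have h0 : (P.complex.d 2 1 ≫ (f' ≫ π)) x = 0 := by rw [hfπ, hf]; rfl
    rw [← CategoryTheory.Category.assoc] at h0
    exact h0
  set k : P.complex.X 2 ⟶ ModuleCat.of Rᵐᵒᵖ ↥N :=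
    ModuleCat.ofHom (LinearMap.codRestrict N (P.complex.d 2 1 ≫ f').hom hmem) with hk
  have hk0 : P.complex.d 3 2 ≫ k = 0 := by
    apply ModuleCat.hom_ext; apply LinearMap.ext; intro x
    apply Subtype.ext
    have : (P.complex.d 3 2 ≫ P.complex.d 2 1 ≫ f') x = 0 := by
      rw [← CategoryTheory.Category.assoc, HomologicalComplex.d_comp_d,
        CategoryTheory.Limits.zero_comp]
      rfl
    exact this
  obtain ⟨h1, hh1⟩ := hN k hk0
  set ι : ModuleCat.of Rᵐᵒᵖ ↥N ⟶ ModuleCat.of Rᵐᵒᵖ M := ModuleCat.ofHom N.subtype with hι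
  have hιπ : ι ≫ π = 0 := by
    apply ModuleCat.hom_ext; apply LinearMap.ext; intro x
    show N.mkQ (N.subtype x) = 0
    rw [Submodule.mkQ_apply]
    exact (Submodule.Quotient.mk_eq_zero N).mpr x.2
  have hd2 : P.complex.d 2 1 ≫ (f' - h1 ≫ ι) = 0 := by
    rw [CategoryTheory.Preadditive.comp_sub, ← CategoryTheory.Category.assoc, hh1]
    apply ModuleCat.hom_ext; apply LinearMap.ext; intro x
    show (P.complex.d 2 1 ≫ f') x - (k ≫ ι) x = 0
    rw [sub_eq_zero]
    rfl
  obtain ⟨g, hg⟩ := hM (f' - h1 ≫ ι) hd2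
  refine ⟨g ≫ π, ?_⟩
  rw [← CategoryTheory.Category.assoc, hg, CategoryTheory.Preadditive.sub_comp,
    CategoryTheory.Category.assoc, hιπ, CategoryTheory.Limits.comp_zero, sub_zero, hfπ]
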